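/- For any integer n ≥ 3, γ_{(2,2,2,0)}(C_n) = n, and γ_{(2,2,2,0)}(P_n) = n for all n ≥ 3 except n = 5, where γ_{(2,2,2,0)}(P_5) = 6. -/

import Mathlib

open scoped Classical
open Finset SimpleGraph

/-- A `w`-dominating function: `f : V → {0,…,l}` with `f(N(v)) ≥ w_{f(v)}` for all `v`. -/
def WDom {V : Type*} [Fintype V] (G : SimpleGraph V) {l : ℕ} (w : Fin (l+1) → ℕ)
    (f : V → Fin (l+1)) : Prop :=
  ∀ v, w (f v) ≤ ∑ u, if G.Adj v u then (f u : ℕ) else 0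

/-- The `w`-domination number. -/
noncomputable def gammaW {V : Type*} [Fintype V] (G : SimpleGraph V) {l : ℕ}
    (w : Fin (l+1) → ℕ) : ℕ :=
  sInf {n | ∃ f : V → Fin (l+1), WDom G w f ∧ ∑ v, (f v : ℕ) = n}

/-- The Italian domination number `γ_I = γ_{(2,0,0)}`. -/
noncomputable def gammaI {V : Type*} [Fintype V] (G : SimpleGraph V) : ℕ :=
  gammaW G ![2,0,0]

/-- The domination number. -/
noncomputable def gamma {V : Type*} [Fintype V] (G : SimpleGraph V) : ℕ :=
  sInf {n | ∃ S : Finset V, (∀ v, v ∈ S ∨ ∃ u ∈ S, G.Adj u v) ∧ S.card = n}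

/-- The total domination number. -/
noncomputable def gammaT {V : Type*} [Fintype V] (G : SimpleGraph V) : ℕ :=
  sInf {n | ∃ S : Finset V, (∀ v, ∃ u ∈ S, G.Adj u v) ∧ S.card = n}

/-- The 2-domination number. -/
noncomputable def gamma2 {V : Type*} [Fintype V] (G : SimpleGraph V) : ℕ :=
  sInf {n | ∃ S : Finset V, (∀ v ∉ S, 2 ≤ (S.filter (fun u => G.Adj u v)).card) ∧ S.card = n}

/-- The double domination number. -/
noncomputable def gammaX2 {V : Type*} [Fintype V] (G : SimpleGraph V) : ℕ :=
  sInf {n | ∃ S : Finset V, (∀ v, 2 ≤ (S.filter (fun u => u = v ∨ G.Adj u v)).card) ∧ S.card = n}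

/-- The double total domination number. -/
noncomputable def gammaX2T {V : Type*} [Fintype V] (G : SimpleGraph V) : ℕ :=
  sInf {n | ∃ S : Finset V, (∀ v, 2 ≤ (S.filter (fun u => G.Adj u v)).card) ∧ S.card = n}

/-- The lexicographic product `G ∘ H`. -/
def lexProd {V W : Type*} (G : SimpleGraph V) (H : SimpleGraph W) : SimpleGraph (V × W) where
  Adj x y := G.Adj x.1 y.1 ∨ (x.1 = y.1 ∧ H.Adj x.2 y.2)
  symm := by
    constructor
    rintro x y (h | ⟨h1, h2⟩)
    · exact Or.inl h.symm
    · exact Or.inr ⟨h1.symm, h2.symm⟩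
  loopless := by
    constructor
    rintro x (h | ⟨_, h⟩)
    · exact G.irrefl h
    · exact H.irrefl h


namespace GammaAux

/-- patterns -/
def Q0 (i : ℕ) : ℕ := if i % 3 = 1 then 3 else 0
def Q1 (i : ℕ) : ℕ := if i < 4 then (if 1 ≤ i then (if i ≤ 2 then 2 else 0) else 0)
  else (if i % 3 = 2 then 3 else 0)
def Q2 (i : ℕ) : ℕ := if i < 8 then (if i % 4 = 1 then 2 else if i % 4 = 2 then 2 else 0)
  else (if i % 3 = 0 then 3 else 0)
def Q5 (i : ℕ) : ℕ := if 1 ≤ i then (if i ≤ 3 then 2 else 0) else 0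

lemma Q0_lt (i : ℕ) : Q0 i < 4 := by unfold Q0; split_ifs <;> omega
lemma Q1_lt (i : ℕ) : Q1 i < 4 := by unfold Q1; split_ifs <;> omega
lemma Q2_lt (i : ℕ) : Q2 i < 4 := by unfold Q2; split_ifs <;> omega
lemma Q5_lt (i : ℕ) : Q5 i < 4 := by unfold Q5; split_ifs <;> omega

lemma Q0_dom {n : ℕ} (h3 : n % 3 = 0) (hn : 3 ≤ n) :
    ∀ i, i < n → Q0 i ≠ 3 →
      2 ≤ (if 1 ≤ i then Q0 (i-1) else 0) + (if i+1 < n then Q0 (i+1) else 0) := by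
  intro i hi hne
  unfold Q0 at hne ⊢
  split_ifs at hne ⊢ <;> omega

lemma Q1_dom {n : ℕ} (h3 : n % 3 = 1) (hn : 3 ≤ n) :
    ∀ i, i < n → Q1 i ≠ 3 →
      2 ≤ (if 1 ≤ i then Q1 (i-1) else 0) + (if i+1 < n then Q1 (i+1) else 0) := by
  intro i hi hne
  unfold Q1 at hne ⊢
  split_ifs at hne ⊢ <;> omega

lemma Q2_dom {n : ℕ} (h3 : n % 3 = 2) (hn : 8 ≤ n) :
    ∀ i, i < n → Q2 i ≠ 3 →
      2 ≤ (if 1 ≤ i then Q2 (i-1) else 0) + (if i+1 < n then Q2 (i+1) else 0) := by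
  intro i hi hne
  unfold Q2 at hne ⊢
  split_ifs at hne ⊢ <;> omega

lemma Q5_dom : ∀ i, i < 5 → Q5 i ≠ 3 →
      2 ≤ (if 1 ≤ i then Q5 (i-1) else 0) + (if i+1 < 5 then Q5 (i+1) else 0) := by
  intro i hi hne
  unfold Q5 at hne ⊢
  split_ifs at hne ⊢ <;> omega

lemma Q0_sum (k : ℕ) : ∑ i ∈ Finset.range (3*k), Q0 i = 3*k := by
  induction k with
  | zero => simp
  | succ k ih =>
    have h : 3*(k+1) = (3*k)+1+1+1 := by ring
    rw [h, Finset.sum_range_succ, Finset.sum_range_succ, Finset.sum_range_succ, ih]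
    have e1 : Q0 (3*k) = 0 := by unfold Q0; split_ifs <;> omega
    have e2 : Q0 (3*k+1) = 3 := by unfold Q0; split_ifs <;> omega
    have e3 : Q0 (3*k+2) = 0 := by unfold Q0; split_ifs <;> omega
    omega

lemma Q1_sum (k : ℕ) : ∑ i ∈ Finset.range (3*k+4), Q1 i = 3*k+4 := by
  induction k with
  | zero => decide
  | succ k ih =>
    have h : 3*(k+1)+4 = (3*k+4)+1+1+1 := by ring
    rw [h, Finset.sum_range_succ, Finset.sum_range_succ, Finset.sum_range_succ, ih]
    have e1 : Q1 (3*k+4) = 0 := by unfold Q1; split_ifs <;> omega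
    have e2 : Q1 (3*k+5) = 3 := by unfold Q1; split_ifs <;> omega
    have e3 : Q1 (3*k+6) = 0 := by unfold Q1; split_ifs <;> omega
    omega

lemma Q2_sum (k : ℕ) : ∑ i ∈ Finset.range (3*k+8), Q2 i = 3*k+8 := by
  induction k with
  | zero => decide
  | succ k ih =>
    have h : 3*(k+1)+8 = (3*k+8)+1+1+1 := by ring
    rw [h, Finset.sum_range_succ, Finset.sum_range_succ, Finset.sum_range_succ, ih]
    have e1 : Q2 (3*k+8) = 0 := by unfold Q2; split_ifs <;> omega
    have e2 : Q2 (3*k+9) = 3 := by unfold Q2; split_ifs <;> omega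
    have e3 : Q2 (3*k+10) = 0 := by unfold Q2; split_ifs <;> omega
    omega

lemma Q5_sum : ∑ i ∈ Finset.range 5, Q5 i = 6 := by decide

end GammaAux

namespace GammaAux2

lemma wval (j : Fin 4) : ![2,2,2,0] j = if (j : ℕ) = 3 then 0 else 2 := by
  fin_cases j <;> rfl

lemma path_sum {n : ℕ} (g : Fin n → ℕ) (G : ℕ → ℕ)
    (hG : ∀ (i : ℕ) (h : i < n), G i = g ⟨i, h⟩) (v : Fin n) :
    (∑ u, @ite _ ((pathGraph n).Adj v u) (Classical.propDecidable _) (g u) 0)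
      = (if 1 ≤ v.val then G (v.val - 1) else 0)
        + (if v.val + 1 < n then G (v.val + 1) else 0) := by
  have key : ∀ u : Fin n,
      (@ite _ ((pathGraph n).Adj v u) (Classical.propDecidable _) (g u) 0)
        = (if u.val + 1 = v.val then g u else 0) + (if v.val + 1 = u.val then g u else 0) := by
    intro u
    by_cases h1 : u.val + 1 = v.val
    · rw [if_pos (pathGraph_adj.mpr (Or.inr h1)), if_pos h1, if_neg (by omega), add_zero]
    · by_cases h2 : v.val + 1 = u.val
      · rw [if_pos (pathGraph_adj.mpr (Or.inl h2)), if_neg h1, if_pos h2, zero_add]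
      · rw [if_neg (fun had => by rcases pathGraph_adj.mp had with h | h; exact h2 h; exact h1 h),
          if_neg h1, if_neg h2, add_zero]
  rw [Finset.sum_congr rfl (fun u _ => key u), Finset.sum_add_distrib]
  congr 1
  · by_cases h : 1 ≤ v.val
    · have hlt : v.val - 1 < n := by omega
      rw [if_pos h, hG _ hlt]
      have hcond : ∀ u : Fin n, (u.val + 1 = v.val) ↔ u = ⟨v.val - 1, hlt⟩ := by
        intro u
        rw [Fin.ext_iff]
        constructor <;> intro hh <;> simp_all <;> omega
      rw [Finset.sum_congr rfl (fun u _ => if_congr (hcond u) rfl rfl),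
        Finset.sum_ite_eq' Finset.univ (⟨v.val - 1, hlt⟩ : Fin n) g,
        if_pos (Finset.mem_univ _)]
    · rw [if_neg h]
      exact Finset.sum_eq_zero (fun u _ => by rw [if_neg (by omega)])
  · by_cases h : v.val + 1 < n
    · rw [if_pos h, hG _ h]
      have hcond : ∀ u : Fin n, (v.val + 1 = u.val) ↔ u = ⟨v.val + 1, h⟩ := by
        intro u
        rw [Fin.ext_iff]
        constructor <;> intro hh <;> simp_all
      rw [Finset.sum_congr rfl (fun u _ => if_congr (hcond u) rfl rfl),
        Finset.sum_ite_eq' Finset.univ (⟨v.val + 1, h⟩ : Fin n) g,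
        if_pos (Finset.mem_univ _)]
    · rw [if_neg h]
      exact Finset.sum_eq_zero (fun u _ => by rw [if_neg (by have := u.isLt; omega)])

open Fin.CommRing in
lemma cycle_sum {m : ℕ} (hm : 1 ≤ m) (g : Fin (m+2) → ℕ) (v : Fin (m+2)) :
    (∑ u, @ite _ ((cycleGraph (m+2)).Adj v u) (Classical.propDecidable _) (g u) 0)
      = g (v - 1) + g (v + 1) := by
  have hne : (v - 1 : Fin (m+2)) ≠ v + 1 := by
    intro h
    have h1 : v = v + 1 + 1 := by rw [← h]; ring
    have h2 : v + 0 = v + 2 := by rw [add_zero]; nth_rewrite 1 [h1]; ring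
    have h3 : (0 : Fin (m+2)) = 2 := add_left_cancel h2
    have h4 : ((0 : Fin (m+2)) : ℕ) = ((2 : Fin (m+2)) : ℕ) := by rw [h3]
    have h5 : ((2 : Fin (m+2)) : ℕ) = 2 % (m+2) := rfl
    have h6 : 2 % (m+2) = 2 := Nat.mod_eq_of_lt (by omega)
    rw [h5, h6, Fin.val_zero] at h4
    exact absurd h4 (by omega)
  have hadj : ∀ u : Fin (m+2), (cycleGraph (m+2)).Adj v u ↔ (u = v - 1 ∨ u = v + 1) := by
    intro u
    rw [cycleGraph_adj]
    constructor
    · rintro (h | h)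
      · left
        rw [sub_eq_iff_eq_add] at h
        rw [eq_sub_iff_add_eq, h]
        exact add_comm u 1
      · right
        rw [sub_eq_iff_eq_add] at h
        rw [h]
        exact add_comm 1 v
    · rintro (rfl | rfl)
      · left; rw [sub_sub_cancel]
      · right; rw [add_sub_cancel_left]
  have key : ∀ u : Fin (m+2),
      (@ite _ ((cycleGraph (m+2)).Adj v u) (Classical.propDecidable _) (g u) 0)
        = (if u = v - 1 then g u else 0) + (if u = v + 1 then g u else 0) := by
    intro u
    by_cases h1 : u = v - 1
    · subst h1
      rw [if_pos ((hadj _).mpr (Or.inl rfl)), if_pos rfl, if_neg hne, add_zero]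
    · by_cases h2 : u = v + 1
      · rw [if_pos ((hadj _).mpr (Or.inr h2)), if_neg h1, if_pos h2, zero_add]
      · rw [if_neg (fun had => by rcases (hadj u).mp had with h | h; exact h1 h; exact h2 h),
          if_neg h1, if_neg h2, add_zero]
  rw [Finset.sum_congr rfl (fun u _ => key u), Finset.sum_add_distrib,
    Finset.sum_ite_eq' Finset.univ (v - 1) g, Finset.sum_ite_eq' Finset.univ (v + 1) g,
    if_pos (Finset.mem_univ _), if_pos (Finset.mem_univ _)]

lemma cycle_shift {m : ℕ} (g : Fin (m+2) → ℕ) :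
    ∑ v, (g (v-1) + g (v+1)) = 2 * ∑ v, g v := by
  rw [Finset.sum_add_distrib, two_mul]
  congr 1
  · exact Fintype.sum_equiv (Equiv.subRight (1 : Fin (m+2))) _ _ (fun v => rfl)
  · exact Fintype.sum_equiv (Equiv.addRight (1 : Fin (m+2))) _ _ (fun v => rfl)

lemma range_shift_left (F : ℕ → ℕ) (m : ℕ) :
    (∑ i ∈ Finset.range (m+1), if 1 ≤ i then F (i-1) else 0) + F m
      = ∑ i ∈ Finset.range (m+1), F i := by
  induction m with
  | zero => simp
  | succ m ih =>
    rw [Finset.sum_range_succ (fun i => if 1 ≤ i then F (i-1) else 0) (m+1),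
      Finset.sum_range_succ F (m+1), if_pos (by omega : 1 ≤ m+1)]
    simp only [Nat.add_sub_cancel]
    omega

lemma range_shift_right (F : ℕ → ℕ) (m : ℕ) :
    (∑ i ∈ Finset.range (m+1), if i+1 < m+1 then F (i+1) else 0) + F 0
      = ∑ i ∈ Finset.range (m+1), F i := by
  rw [Finset.sum_range_succ, if_neg (by omega), add_zero,
    Finset.sum_congr rfl (fun i hi => if_pos (by rw [Finset.mem_range] at hi; omega)),
    Finset.sum_range_succ' F m]

end GammaAux2

namespace GammaAux3
open GammaAux GammaAux2

lemma nat_path_lb {n : ℕ} (hn : 1 ≤ n) (F GG : ℕ → ℕ) (hb : ∀ i, F i ≤ 3)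
    (hg : ∀ i, (F i = 3 ∧ GG i = 1) ∨ (F i ≠ 3 ∧ GG i = 0))
    (hdom : ∀ i, i < n → F i ≠ 3 →
      2 ≤ (if 1 ≤ i then F (i-1) else 0) + (if i+1 < n then F (i+1) else 0)) :
    n ≤ ∑ i ∈ Finset.range n, F i := by
  obtain ⟨m, rfl⟩ : ∃ m, n = m + 1 := ⟨n - 1, by omega⟩
  have key : ∀ i ∈ Finset.range (m+1),
      (2 + ((if 1 ≤ i then GG (i-1) else 0) + (if i+1 < m+1 then GG (i+1) else 0)))
        ≤ (((if 1 ≤ i then F (i-1) else 0) + (if i+1 < m+1 then F (i+1) else 0)) + 2 * GG i) := by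
    intro i hi
    rw [Finset.mem_range] at hi
    rcases hg i with ⟨h1, h2⟩ | ⟨h1, h2⟩
    · rcases hg (i-1) with ⟨a1, a2⟩ | ⟨a1, a2⟩ <;> rcases hg (i+1) with ⟨b1, b2⟩ | ⟨b1, b2⟩ <;>
        split_ifs <;> omega
    · have hd := hdom i hi h1
      rcases hg (i-1) with ⟨a1, a2⟩ | ⟨a1, a2⟩ <;> rcases hg (i+1) with ⟨b1, b2⟩ | ⟨b1, b2⟩ <;>
        split_ifs at hd ⊢ <;> omega
  have hsum := Finset.sum_le_sum key
  simp only [Finset.sum_add_distrib, Finset.sum_const, Finset.card_range, smul_eq_mul,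
    ← Finset.mul_sum] at hsum
  have eA := range_shift_left F m
  have eB := range_shift_right F m
  have eC := range_shift_left GG m
  have eD := range_shift_right GG m
  have p1 : GG m ≤ F m := by rcases hg m with ⟨h1, h2⟩ | ⟨h1, h2⟩ <;> omega
  have p2 : GG 0 ≤ F 0 := by rcases hg 0 with ⟨h1, h2⟩ | ⟨h1, h2⟩ <;> omega
  omega

lemma path_hdom {n : ℕ} (f : Fin n → Fin 4) (hf : WDom (pathGraph n) ![2,2,2,0] f)
    (F : ℕ → ℕ) (hFv : ∀ (i : ℕ) (h : i < n), F i = (f ⟨i, h⟩ : ℕ)) :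
    ∀ i, i < n → F i ≠ 3 →
      2 ≤ (if 1 ≤ i then F (i-1) else 0) + (if i+1 < n then F (i+1) else 0) := by
  intro i hi hne
  have hd := hf ⟨i, hi⟩
  rw [wval, path_sum (fun u => (f u : ℕ)) F (fun j hj => hFv j hj) ⟨i, hi⟩] at hd
  rw [if_neg (by rw [← hFv i hi]; exact hne)] at hd
  exact hd

lemma path_lb {n : ℕ} (hn : 1 ≤ n) (f : Fin n → Fin 4)
    (hf : WDom (pathGraph n) ![2,2,2,0] f) : n ≤ ∑ v, (f v : ℕ) := by
  set F : ℕ → ℕ := fun i => if h : i < n then (f ⟨i, h⟩ : ℕ) else 0 with hF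
  have hFv : ∀ (i : ℕ) (h : i < n), F i = (f ⟨i, h⟩ : ℕ) := fun i h => by simp [hF, h]
  have hb : ∀ i, F i ≤ 3 := by
    intro i
    by_cases h : i < n
    · rw [hFv i h]; have := (f ⟨i, h⟩).isLt; omega
    · simp [hF, h]
  have hsum : ∑ v, (f v : ℕ) = ∑ i ∈ Finset.range n, F i := by
    rw [← Fin.sum_univ_eq_sum_range F n]
    exact Finset.sum_congr rfl (fun v _ => (hFv v.1 v.2).symm)
  rw [hsum]
  exact nat_path_lb hn F (fun i => if F i = 3 then 1 else 0) hb
    (fun i => by by_cases h : F i = 3 <;> simp [h]) (path_hdom f hf F hFv)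

lemma p5_lb (f : Fin 5 → Fin 4) (hf : WDom (pathGraph 5) ![2,2,2,0] f) :
    6 ≤ ∑ v, (f v : ℕ) := by
  set F : ℕ → ℕ := fun i => if h : i < 5 then (f ⟨i, h⟩ : ℕ) else 0 with hF
  have hFv : ∀ (i : ℕ) (h : i < 5), F i = (f ⟨i, h⟩ : ℕ) := fun i h => by simp [hF, h]
  have hb : ∀ i, i < 5 → F i ≤ 3 := by
    intro i h
    rw [hFv i h]; have := (f ⟨i, h⟩).isLt; omega
  have hd := path_hdom f hf F hFv
  have c0 := hd 0 (by norm_num)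
  have c1 := hd 1 (by norm_num)
  have c2 := hd 2 (by norm_num)
  have c3 := hd 3 (by norm_num)
  have c4 := hd 4 (by norm_num)
  norm_num at c0 c1 c2 c3 c4
  have hs : ∑ v, (f v : ℕ) = F 0 + F 1 + F 2 + F 3 + F 4 := by
    rw [Fin.sum_univ_five]
    rw [hFv 0 (by norm_num), hFv 1 (by norm_num), hFv 2 (by norm_num), hFv 3 (by norm_num),
      hFv 4 (by norm_num)]
    rfl
  rw [hs]
  have d0 : F 0 = 3 ∨ 2 ≤ F 1 := by
    rcases eq_or_ne (F 0) 3 with h | h; exacts [Or.inl h, Or.inr (c0 h)]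
  have d1 : F 1 = 3 ∨ 2 ≤ F 0 + F 2 := by
    rcases eq_or_ne (F 1) 3 with h | h; exacts [Or.inl h, Or.inr (c1 h)]
  have d2 : F 2 = 3 ∨ 2 ≤ F 1 + F 3 := by
    rcases eq_or_ne (F 2) 3 with h | h; exacts [Or.inl h, Or.inr (c2 h)]
  have d3 : F 3 = 3 ∨ 2 ≤ F 2 + F 4 := by
    rcases eq_or_ne (F 3) 3 with h | h; exacts [Or.inl h, Or.inr (c3 h)]
  have d4 : F 4 = 3 ∨ 2 ≤ F 3 := by
    rcases eq_or_ne (F 4) 3 with h | h; exacts [Or.inl h, Or.inr (c4 h)]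
  have b0 := hb 0 (by norm_num); have b1 := hb 1 (by norm_num); have b2 := hb 2 (by norm_num)
  have b3 := hb 3 (by norm_num); have b4 := hb 4 (by norm_num)
  rcases d0 with d0 | d0 <;> rcases d1 with d1 | d1 <;> rcases d2 with d2 | d2 <;>
    rcases d3 with d3 | d3 <;> rcases d4 with d4 | d4 <;> omega

lemma path_ub {n : ℕ} (Q : ℕ → ℕ) (hlt : ∀ i, Q i < 4)
    (hdom : ∀ i, i < n → Q i ≠ 3 →
      2 ≤ (if 1 ≤ i then Q (i-1) else 0) + (if i+1 < n then Q (i+1) else 0)) :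
    ∃ f : Fin n → Fin 4, WDom (pathGraph n) ![2,2,2,0] f ∧
      ∑ v, (f v : ℕ) = ∑ i ∈ Finset.range n, Q i := by
  refine ⟨fun v => ⟨Q v.val, hlt v.val⟩, ?_, ?_⟩
  · intro v
    show ![2,2,2,0] (⟨Q v.val, hlt v.val⟩ : Fin 4)
      ≤ ∑ u, @ite _ ((pathGraph n).Adj v u) (Classical.propDecidable _) (Q u.val) 0
    rw [path_sum (fun u : Fin n => Q u.val) Q (fun i h => rfl) v, wval]
    by_cases h : Q v.val = 3
    · rw [if_pos (show ((⟨Q v.val, hlt v.val⟩ : Fin 4) : ℕ) = 3 from h)]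
      exact Nat.zero_le _
    · rw [if_neg (show ¬((⟨Q v.val, hlt v.val⟩ : Fin 4) : ℕ) = 3 from h)]
      exact hdom v.val v.isLt h
  · exact Fin.sum_univ_eq_sum_range Q n

lemma cycle_lb {m : ℕ} (hm : 1 ≤ m) (f : Fin (m+2) → Fin 4)
    (hf : WDom (cycleGraph (m+2)) ![2,2,2,0] f) : m + 2 ≤ ∑ v, (f v : ℕ) := by
  have hd : ∀ v : Fin (m+2), (f v : ℕ) = 3 ∨ 2 ≤ (f (v-1) : ℕ) + (f (v+1) : ℕ) := by
    intro v
    rcases eq_or_ne ((f v : ℕ)) 3 with h | h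
    · exact Or.inl h
    · right
      have hv := hf v
      rw [wval, if_neg h, cycle_sum hm (fun u => (f u : ℕ)) v] at hv
      exact hv
  have key : ∀ v ∈ (Finset.univ : Finset (Fin (m+2))),
      (2 + ((if (f (v-1) : ℕ) = 3 then 1 else 0) + (if (f (v+1) : ℕ) = 3 then 1 else 0)))
        ≤ (((f (v-1) : ℕ) + (f (v+1) : ℕ)) + 2 * (if (f v : ℕ) = 3 then 1 else 0)) := by
    intro v _
    have b1 : (f (v-1) : ℕ) < 4 := (f (v-1)).isLt
    have b2 : (f (v+1) : ℕ) < 4 := (f (v+1)).isLt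
    rcases hd v with h | h <;> split_ifs <;> omega
  have hsum := Finset.sum_le_sum key
  simp only [Finset.sum_add_distrib, Finset.sum_const, Finset.card_univ, Fintype.card_fin,
    smul_eq_mul, ← Finset.mul_sum] at hsum
  have e1 := cycle_shift (fun v => (f v : ℕ))
  have e2 := cycle_shift (fun v => if (f v : ℕ) = 3 then 1 else 0)
  simp only [Finset.sum_add_distrib] at e1 e2
  omega

lemma cycle_ub {m : ℕ} (hm : 1 ≤ m) :
    WDom (cycleGraph (m+2)) ![2,2,2,0] (fun _ => (1 : Fin 4)) := by
  intro v
  show ![2,2,2,0] (1 : Fin 4)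
    ≤ ∑ u, @ite _ ((cycleGraph (m+2)).Adj v u) (Classical.propDecidable _) ((1 : Fin 4) : ℕ) 0
  rw [cycle_sum hm (fun _ => ((1 : Fin 4) : ℕ)) v]
  decide

lemma gammaW_eq {V : Type*} [Fintype V] (G : SimpleGraph V) {N : ℕ}
    (hub : ∃ f : V → Fin 4, WDom G ![2,2,2,0] f ∧ ∑ v, (f v : ℕ) = N)
    (hlb : ∀ f : V → Fin 4, WDom G ![2,2,2,0] f → N ≤ ∑ v, (f v : ℕ)) :
    gammaW G ![2,2,2,0] = N := by
  obtain ⟨f, hf, hs⟩ := hub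
  apply le_antisymm
  · exact Nat.sInf_le ⟨f, hf, hs⟩
  · refine le_csInf ⟨N, ⟨f, hf, hs⟩⟩ ?_
    rintro b ⟨f', hf', rfl⟩
    exact hlb f' hf'

end GammaAux3

open GammaAux GammaAux2 GammaAux3 in
theorem gammaW2220_cycle_path (n : ℕ) (hn : 3 ≤ n) :
    gammaW (SimpleGraph.cycleGraph n) ![2,2,2,0] = n ∧
    gammaW (SimpleGraph.pathGraph n) ![2,2,2,0] = (if n = 5 then 6 else n) := by
  constructor
  · obtain ⟨m, hm, rfl⟩ : ∃ m, 1 ≤ m ∧ n = m + 2 := ⟨n - 2, by omega, by omega⟩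
    apply gammaW_eq
    · exact ⟨fun _ => 1, cycle_ub hm, by simp⟩
    · exact fun f hf => cycle_lb hm f hf
  · by_cases h5 : n = 5
    · subst h5
      rw [if_pos rfl]
      apply gammaW_eq
      · obtain ⟨f, hw, hs⟩ := path_ub Q5 Q5_lt Q5_dom
        exact ⟨f, hw, by rw [hs]; exact Q5_sum⟩
      · exact fun f hf => p5_lb f hf
    · rw [if_neg h5]
      apply gammaW_eq
      · have h3 : n % 3 = 0 ∨ n % 3 = 1 ∨ n % 3 = 2 := by omega
        rcases h3 with h | h | h
        · obtain ⟨k, rfl⟩ : ∃ k, n = 3*k := ⟨n/3, by omega⟩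
          obtain ⟨f, hw, hs⟩ := path_ub Q0 Q0_lt (Q0_dom (by omega) hn)
          exact ⟨f, hw, by rw [hs]; exact Q0_sum k⟩
        · obtain ⟨k, rfl⟩ : ∃ k, n = 3*k+4 := ⟨(n-4)/3, by omega⟩
          obtain ⟨f, hw, hs⟩ := path_ub Q1 Q1_lt (Q1_dom (by omega) hn)
          exact ⟨f, hw, by rw [hs]; exact Q1_sum k⟩
        · obtain ⟨k, rfl⟩ : ∃ k, n = 3*k+8 := ⟨(n-8)/3, by omega⟩
          obtain ⟨f, hw, hs⟩ := path_ub (n := 3*k+8) Q2 Q2_lt (Q2_dom (by omega) (by omega))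
          exact ⟨f, hw, by rw [hs]; exact Q2_sum k⟩
      · exact fun f hf => path_lb (by omega) f hf
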